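/- Let ι be a finite nonempty index type, let M : ι → ι → ℝ have all entries strictly positive, let β ≥ 1, and let τ with 0 ≤ τ < 1 be such that d_H(S(x), S(y)) ≤ τ · d_H(x, y) and d_H(M x, M y) ≤ τ · d_H(x, y) for all strictly positive x, y : ι → ℝ, where S(u)_i = ∑_k u_k · M_{k i} and (M u)_j = ∑_i M_{j i} · u_i. Then there exists a strictly positive vector u* : ι → ℝ and a real c > 0 with T(u*) = c • u*; the vector u* is unique up to multiplication by a positive scalar (any strictly positive w with T(w) = c' • w for some c' > 0 satisfies w = a • u* for some a > 0); and for every strictly positive x and every n ∈ ℕ, d_H(T^n(x), u*) ≤ ( (2τ + τ²(β − 1)) / (1 + β) )^n · d_H(x, u*), so the iterates of T converge linearly in the Hilbert projective metric to u*. -/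

import Mathlib

open Finset Real

set_option linter.unusedSectionVars false
set_option linter.unusedVariables false
set_option maxHeartbeats 1000000

/-- Hilbert projective metric on strictly positive vectors:
`d_H(x,y) = log (max_i x i / y i) - log (min_i x i / y i)`. -/
noncomputable def dH {ι : Type*} [Fintype ι] [Nonempty ι] (x y : ι → ℝ) : ℝ :=
  Real.log (⨆ i, x i / y i) - Real.log (⨅ i, x i / y i)

/-- `S(u) i = ∑ k, u k * M k i`. -/
noncomputable def eveS {ι : Type*} [Fintype ι] (M : ι → ι → ℝ) (u : ι → ℝ) : ι → ℝ :=
  fun i => ∑ k, u k * M k i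

/-- The EVE operator
`T(u) j = ( S(u) j ^ (1/β) / (∑ i, M j i * u i ^ (-1/β) * S(u) i ^ ((1-β)/β)) ) ^ (β/(1+β))`,
where all powers are real powers. -/
noncomputable def eveT {ι : Type*} [Fintype ι] (M : ι → ι → ℝ) (β : ℝ) (u : ι → ℝ) : ι → ℝ :=
  fun j => (eveS M u j ^ (1 / β) /
      ∑ i, M j i * u i ^ (-1 / β) * eveS M u i ^ ((1 - β) / β)) ^ (β / (1 + β))


section helpers
variable {ι : Type*} [Fintype ι] [Nonempty ι]

lemma fle_sup (f : ι → ℝ) (i : ι) : f i ≤ ⨆ j, f j :=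
  le_ciSup (Set.finite_range f).bddAbove i

lemma finf_le (f : ι → ℝ) (i : ι) : ⨅ j, f j ≤ f i :=
  ciInf_le (Set.finite_range f).bddBelow i

lemma sup_att (f : ι → ℝ) : ∃ i, (⨆ j, f j) = f i := by
  obtain ⟨i, hi⟩ := Finite.exists_max f
  exact ⟨i, le_antisymm (ciSup_le hi) (fle_sup f i)⟩

lemma inf_att (f : ι → ℝ) : ∃ i, (⨅ j, f j) = f i := by
  obtain ⟨i, hi⟩ := Finite.exists_min f
  exact ⟨i, le_antisymm (finf_le f i) (le_ciInf hi)⟩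

variable {x y z w : ι → ℝ}

lemma sup_div_pos (hx : ∀ i, 0 < x i) (hy : ∀ i, 0 < y i) : 0 < ⨆ i, x i / y i := by
  obtain i := Classical.arbitrary ι
  exact lt_of_lt_of_le (div_pos (hx i) (hy i)) (fle_sup (fun i => x i / y i) i)

lemma inf_div_pos (hx : ∀ i, 0 < x i) (hy : ∀ i, 0 < y i) : 0 < ⨅ i, x i / y i := by
  obtain ⟨i, hi⟩ := inf_att (fun i => x i / y i)
  rw [hi]; exact div_pos (hx i) (hy i)

lemma finf_le_sup (f : ι → ℝ) : (⨅ i, f i) ≤ ⨆ i, f i := by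
  obtain i := Classical.arbitrary ι
  exact (finf_le f i).trans (fle_sup f i)

lemma dH_nonneg (hx : ∀ i, 0 < x i) (hy : ∀ i, 0 < y i) : 0 ≤ dH x y := by
  have := Real.log_le_log (inf_div_pos hx hy) (finf_le_sup (fun i => x i / y i))
  simp only [dH]; linarith

lemma sup_inv_eq (hx : ∀ i, 0 < x i) (hy : ∀ i, 0 < y i) :
    (⨆ i, x i / y i) = (⨅ i, y i / x i)⁻¹ := by
  obtain ⟨i, hi⟩ := inf_att (fun i => y i / x i)
  apply le_antisymm
  · apply ciSup_le
    intro j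
    rw [hi, show x j / y j = (y j / x j)⁻¹ by rw [inv_div]]
    exact inv_anti₀ (div_pos (hy i) (hx i)) (hi ▸ finf_le (fun k => y k / x k) j)
  · rw [hi, inv_div]
    exact fle_sup (fun k => x k / y k) i

lemma dH_symm (hx : ∀ i, 0 < x i) (hy : ∀ i, 0 < y i) : dH x y = dH y x := by
  have h1 := sup_inv_eq hx hy
  have h2 := sup_inv_eq hy hx
  have h3 : (⨅ i, x i / y i) = (⨆ i, y i / x i)⁻¹ := by
    rw [h2, inv_inv]
  simp only [dH, h1, h3, Real.log_inv]
  ring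

lemma sup_const_mul {c : ℝ} (hc : 0 ≤ c) (f : ι → ℝ) : (⨆ i, c * f i) = c * ⨆ i, f i := by
  apply le_antisymm
  · exact ciSup_le fun i => mul_le_mul_of_nonneg_left (fle_sup f i) hc
  · obtain ⟨j, hj⟩ := sup_att f
    rw [hj]
    exact fle_sup (fun i => c * f i) j

lemma inf_const_mul {c : ℝ} (hc : 0 ≤ c) (f : ι → ℝ) : (⨅ i, c * f i) = c * ⨅ i, f i := by
  apply le_antisymm
  · obtain ⟨j, hj⟩ := inf_att f
    rw [hj]
    exact finf_le (fun i => c * f i) j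
  · exact le_ciInf fun i => mul_le_mul_of_nonneg_left (finf_le f i) hc

lemma dH_smul_right {c : ℝ} (hc : 0 < c) (hx : ∀ i, 0 < x i) (hy : ∀ i, 0 < y i) :
    dH x (c • y) = dH x y := by
  have h : (fun i => x i / (c • y) i) = fun i => c⁻¹ * (x i / y i) := by
    funext i; simp only [Pi.smul_apply, smul_eq_mul]; field_simp
  simp only [dH, h, sup_const_mul (inv_pos.mpr hc).le, inf_const_mul (inv_pos.mpr hc).le,
    Real.log_mul (inv_pos.mpr hc).ne' (sup_div_pos hx hy).ne',
    Real.log_mul (inv_pos.mpr hc).ne' (inf_div_pos hx hy).ne']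
  ring

lemma dH_smul_left {c : ℝ} (hc : 0 < c) (hx : ∀ i, 0 < x i) (hy : ∀ i, 0 < y i) :
    dH (c • x) y = dH x y := by
  have h : (fun i => (c • x) i / y i) = fun i => c * (x i / y i) := by
    funext i; simp only [Pi.smul_apply, smul_eq_mul]; ring
  simp only [dH, h, sup_const_mul hc.le, inf_const_mul hc.le,
    Real.log_mul hc.ne' (sup_div_pos hx hy).ne',
    Real.log_mul hc.ne' (inf_div_pos hx hy).ne']
  ring

lemma dH_eq_zero (hx : ∀ i, 0 < x i) (hy : ∀ i, 0 < y i) (h : dH x y = 0) :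
    ∃ a : ℝ, 0 < a ∧ x = a • y := by
  have hsi : (⨆ i, x i / y i) = ⨅ i, x i / y i := by
    have := Real.log_injOn_pos (Set.mem_Ioi.mpr (sup_div_pos hx hy))
      (Set.mem_Ioi.mpr (inf_div_pos hx hy))
    exact this (by simpa [dH, sub_eq_zero] using h)
  refine ⟨⨅ i, x i / y i, inf_div_pos hx hy, ?_⟩
  funext i
  have h1 := finf_le (fun i => x i / y i) i
  have h2 := fle_sup (fun i => x i / y i) i
  rw [hsi] at h2
  have : x i / y i = ⨅ i, x i / y i := le_antisymm h2 h1
  simp only [Pi.smul_apply, smul_eq_mul]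
  rw [← this, div_mul_cancel₀ _ (hy i).ne']

lemma dH_mul_le (hx : ∀ i, 0 < x i) (hy : ∀ i, 0 < y i) (hz : ∀ i, 0 < z i)
    (hw : ∀ i, 0 < w i) :
    dH (fun i => x i * z i) (fun i => y i * w i) ≤ dH x y + dH z w := by
  have hsup : (⨆ i, x i * z i / (y i * w i)) ≤ (⨆ i, x i / y i) * ⨆ i, z i / w i := by
    apply ciSup_le
    intro i
    have : x i * z i / (y i * w i) = (x i / y i) * (z i / w i) := by
      field_simp
    rw [this]
    exact mul_le_mul (fle_sup (fun i => x i / y i) i) (fle_sup (fun i => z i / w i) i)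
      (div_pos (hz i) (hw i)).le (sup_div_pos hx hy).le
  have hinf : (⨅ i, x i / y i) * (⨅ i, z i / w i) ≤ ⨅ i, x i * z i / (y i * w i) := by
    apply le_ciInf
    intro i
    have : x i * z i / (y i * w i) = (x i / y i) * (z i / w i) := by
      field_simp
    rw [this]
    exact mul_le_mul (finf_le (fun i => x i / y i) i) (finf_le (fun i => z i / w i) i)
      (inf_div_pos hz hw).le (div_pos (hx i) (hy i)).le
  have hxy := sup_div_pos hx hy
  have hzw := sup_div_pos hz hw
  have hixy := inf_div_pos hx hy
  have hizw := inf_div_pos hz hw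
  have hp : 0 < ⨅ i, x i * z i / (y i * w i) :=
    inf_div_pos (fun i => mul_pos (hx i) (hz i)) (fun i => mul_pos (hy i) (hw i))
  have l1 : Real.log (⨆ i, x i * z i / (y i * w i)) ≤
      Real.log (⨆ i, x i / y i) + Real.log (⨆ i, z i / w i) := by
    rw [← Real.log_mul hxy.ne' hzw.ne']
    exact Real.log_le_log (sup_div_pos (fun i => mul_pos (hx i) (hz i))
      (fun i => mul_pos (hy i) (hw i))) hsup
  have l2 : Real.log (⨅ i, x i / y i) + Real.log (⨅ i, z i / w i) ≤
      Real.log (⨅ i, x i * z i / (y i * w i)) := by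
    rw [← Real.log_mul hixy.ne' hizw.ne']
    exact Real.log_le_log (mul_pos hixy hizw) hinf
  simp only [dH]
  linarith

lemma dH_triangle (hx : ∀ i, 0 < x i) (hy : ∀ i, 0 < y i) (hz : ∀ i, 0 < z i) :
    dH x z ≤ dH x y + dH y z := by
  have key : ∀ i, x i / z i = (x i / y i) * (y i / z i) := by
    intro i; rw [div_mul_div_comm, mul_comm (y i) (z i), mul_div_mul_right _ _ (hy i).ne']
  have hsup : (⨆ i, x i / z i) ≤ (⨆ i, x i / y i) * ⨆ i, y i / z i := by
    apply ciSup_le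
    intro i
    rw [key i]
    exact mul_le_mul (fle_sup (fun i => x i / y i) i) (fle_sup (fun i => y i / z i) i)
      (div_pos (hy i) (hz i)).le (sup_div_pos hx hy).le
  have hinf : (⨅ i, x i / y i) * (⨅ i, y i / z i) ≤ ⨅ i, x i / z i := by
    apply le_ciInf
    intro i
    rw [key i]
    exact mul_le_mul (finf_le (fun i => x i / y i) i) (finf_le (fun i => y i / z i) i)
      (inf_div_pos hy hz).le (div_pos (hx i) (hy i)).le
  have l1 : Real.log (⨆ i, x i / z i) ≤
      Real.log (⨆ i, x i / y i) + Real.log (⨆ i, y i / z i) := by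
    rw [← Real.log_mul (sup_div_pos hx hy).ne' (sup_div_pos hy hz).ne']
    exact Real.log_le_log (sup_div_pos hx hz) hsup
  have l2 : Real.log (⨅ i, x i / y i) + Real.log (⨅ i, y i / z i) ≤
      Real.log (⨅ i, x i / z i) := by
    rw [← Real.log_mul (inf_div_pos hx hy).ne' (inf_div_pos hy hz).ne']
    exact Real.log_le_log (mul_pos (inf_div_pos hx hy) (inf_div_pos hy hz)) hinf
  simp only [dH]
  linarith

lemma dH_inv (hx : ∀ i, 0 < x i) (hy : ∀ i, 0 < y i) :
    dH (fun i => (x i)⁻¹) (fun i => (y i)⁻¹) = dH x y := by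
  have key : (fun i => (x i)⁻¹ / (y i)⁻¹) = fun i => y i / x i := by
    funext i
    rw [div_eq_mul_inv, inv_inv, mul_comm, ← div_eq_mul_inv]
  have : dH (fun i => (x i)⁻¹) (fun i => (y i)⁻¹) = dH y x := by
    simp only [dH, key]
  rw [this, dH_symm hy hx]

lemma dH_rpow {α : ℝ} (hα : 0 ≤ α) (hx : ∀ i, 0 < x i) (hy : ∀ i, 0 < y i) :
    dH (fun i => x i ^ α) (fun i => y i ^ α) = α * dH x y := by
  have key : ∀ i, x i ^ α / y i ^ α = (x i / y i) ^ α := by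
    intro i; rw [Real.div_rpow (hx i).le (hy i).le]
  have hsup : (⨆ i, x i ^ α / y i ^ α) = (⨆ i, x i / y i) ^ α := by
    apply le_antisymm
    · apply ciSup_le
      intro i
      rw [key i]
      exact Real.rpow_le_rpow (div_pos (hx i) (hy i)).le (fle_sup (fun i => x i / y i) i) hα
    · obtain ⟨j, hj⟩ := sup_att (fun i => x i / y i)
      rw [hj, ← key j]
      exact fle_sup (fun i => x i ^ α / y i ^ α) j
  have hinf : (⨅ i, x i ^ α / y i ^ α) = (⨅ i, x i / y i) ^ α := by
    apply le_antisymm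
    · obtain ⟨j, hj⟩ := inf_att (fun i => x i / y i)
      rw [hj, ← key j]
      exact finf_le (fun i => x i ^ α / y i ^ α) j
    · apply le_ciInf
      intro i
      rw [key i]
      exact Real.rpow_le_rpow (inf_div_pos hx hy).le (finf_le (fun i => x i / y i) i) hα
  simp only [dH, hsup, hinf, Real.log_rpow (sup_div_pos hx hy), Real.log_rpow (inf_div_pos hx hy)]
  ring

lemma dH_rpow_neg {α : ℝ} (hα : α ≤ 0) (hx : ∀ i, 0 < x i) (hy : ∀ i, 0 < y i) :
    dH (fun i => x i ^ α) (fun i => y i ^ α) = (-α) * dH x y := by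
  have e : ∀ (u : ι → ℝ), (∀ i, 0 < u i) → (fun i => u i ^ α) = fun i => (u i ^ (-α))⁻¹ := by
    intro u hu
    funext i
    rw [← Real.rpow_neg (hu i).le, neg_neg]
  rw [e x hx, e y hy,
    dH_inv (fun i => Real.rpow_pos_of_pos (hx i) _) (fun i => Real.rpow_pos_of_pos (hy i) _),
    dH_rpow (by linarith) hx hy]

lemma dH_div_le (hx : ∀ i, 0 < x i) (hy : ∀ i, 0 < y i) (hz : ∀ i, 0 < z i)
    (hw : ∀ i, 0 < w i) :
    dH (fun i => x i / z i) (fun i => y i / w i) ≤ dH x y + dH z w := by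
  have e1 : (fun i => x i / z i) = fun i => x i * (z i)⁻¹ := by
    funext i; rw [div_eq_mul_inv]
  have e2 : (fun i => y i / w i) = fun i => y i * (w i)⁻¹ := by
    funext i; rw [div_eq_mul_inv]
  rw [e1, e2]
  calc dH (fun i => x i * (z i)⁻¹) (fun i => y i * (w i)⁻¹)
      ≤ dH x y + dH (fun i => (z i)⁻¹) (fun i => (w i)⁻¹) :=
        dH_mul_le hx hy (fun i => inv_pos.mpr (hz i)) (fun i => inv_pos.mpr (hw i))
    _ = dH x y + dH z w := by rw [dH_inv hz hw]

end helpers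


section eve
variable {ι : Type*} [Fintype ι] [Nonempty ι] {M : ι → ι → ℝ} {β : ℝ}

lemma eveS_pos (hM : ∀ i j, 0 < M i j) {u : ι → ℝ} (hu : ∀ i, 0 < u i) :
    ∀ i, 0 < eveS M u i := by
  intro i
  exact Finset.sum_pos (fun k _ => mul_pos (hu k) (hM k i)) Finset.univ_nonempty

lemma eveDen_pos (hM : ∀ i j, 0 < M i j) {u : ι → ℝ} (hu : ∀ i, 0 < u i) (j : ι) :
    0 < ∑ i, M j i * u i ^ (-1 / β) * eveS M u i ^ ((1 - β) / β) := by
  apply Finset.sum_pos (fun i _ => ?_) Finset.univ_nonempty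
  exact mul_pos (mul_pos (hM j i) (Real.rpow_pos_of_pos (hu i) _))
    (Real.rpow_pos_of_pos (eveS_pos hM hu i) _)

lemma eveT_pos (hM : ∀ i j, 0 < M i j) {u : ι → ℝ} (hu : ∀ i, 0 < u i) :
    ∀ j, 0 < eveT M β u j := by
  intro j
  have h1 := eveS_pos hM hu j
  have h2 := eveDen_pos (β := β) hM hu j
  exact Real.rpow_pos_of_pos (div_pos (Real.rpow_pos_of_pos h1 _) h2) _

lemma eveT_contracts (hM : ∀ i j, 0 < M i j) (hβ : 1 ≤ β) {τ : ℝ} (hτ0 : 0 ≤ τ)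
    (hS : ∀ x y : ι → ℝ, (∀ i, 0 < x i) → (∀ i, 0 < y i) →
      dH (eveS M x) (eveS M y) ≤ τ * dH x y)
    (hMap : ∀ x y : ι → ℝ, (∀ i, 0 < x i) → (∀ i, 0 < y i) →
      dH (fun j => ∑ i, M j i * x i) (fun j => ∑ i, M j i * y i) ≤ τ * dH x y)
    {x y : ι → ℝ} (hx : ∀ i, 0 < x i) (hy : ∀ i, 0 < y i) :
    dH (eveT M β x) (eveT M β y) ≤ ((2 * τ + τ ^ 2 * (β - 1)) / (1 + β)) * dH x y := by
  have hβ0 : 0 < β := lt_of_lt_of_le one_pos hβ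
  have hob : (0:ℝ) ≤ 1 / β := by
    apply div_nonneg zero_le_one hβ0.le
  have hbb : (0:ℝ) ≤ (β - 1) / β := div_nonneg (by linarith) hβ0.le
  have hd0 : 0 ≤ dH x y := dH_nonneg hx hy
  set vx : ι → ℝ := fun i => x i ^ (-1 / β) * eveS M x i ^ ((1 - β) / β) with hvx
  set vy : ι → ℝ := fun i => y i ^ (-1 / β) * eveS M y i ^ ((1 - β) / β) with hvy
  have hSx := eveS_pos hM hx
  have hSy := eveS_pos hM hy
  have hvxp : ∀ i, 0 < vx i := fun i =>
    mul_pos (Real.rpow_pos_of_pos (hx i) _) (Real.rpow_pos_of_pos (hSx i) _)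
  have hvyp : ∀ i, 0 < vy i := fun i =>
    mul_pos (Real.rpow_pos_of_pos (hy i) _) (Real.rpow_pos_of_pos (hSy i) _)
  have hSd : dH (eveS M x) (eveS M y) ≤ τ * dH x y := hS x y hx hy
  have hSd0 : 0 ≤ dH (eveS M x) (eveS M y) := dH_nonneg hSx hSy
  have hnum : dH (fun j => eveS M x j ^ (1 / β)) (fun j => eveS M y j ^ (1 / β))
      = (1 / β) * dH (eveS M x) (eveS M y) := dH_rpow hob hSx hSy
  have hmo : -1 / β ≤ 0 := div_nonpos_of_nonpos_of_nonneg (by norm_num) hβ0.le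
  have hv1 : dH (fun i => x i ^ (-1 / β)) (fun i => y i ^ (-1 / β)) = (1 / β) * dH x y := by
    rw [dH_rpow_neg hmo hx hy]
    ring
  have hv2 : dH (fun i => eveS M x i ^ ((1 - β) / β)) (fun i => eveS M y i ^ ((1 - β) / β))
      = ((β - 1) / β) * dH (eveS M x) (eveS M y) := by
    rw [dH_rpow_neg (div_nonpos_of_nonpos_of_nonneg (by linarith) hβ0.le) hSx hSy]
    ring
  have hv : dH vx vy ≤ (1 / β) * dH x y + ((β - 1) / β) * (τ * dH x y) := by
    have step := dH_mul_le (x := fun i => x i ^ (-1 / β)) (y := fun i => y i ^ (-1 / β))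
      (z := fun i => eveS M x i ^ ((1 - β) / β)) (w := fun i => eveS M y i ^ ((1 - β) / β))
      (fun i => Real.rpow_pos_of_pos (hx i) _) (fun i => Real.rpow_pos_of_pos (hy i) _)
      (fun i => Real.rpow_pos_of_pos (hSx i) _) (fun i => Real.rpow_pos_of_pos (hSy i) _)
    rw [hv1, hv2] at step
    refine step.trans ?_
    have := mul_le_mul_of_nonneg_left hSd hbb
    linarith
  have hden : dH (fun j => ∑ i, M j i * vx i) (fun j => ∑ i, M j i * vy i) ≤ τ * dH vx vy :=
    hMap vx vy hvxp hvyp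
  have hdenp : ∀ j, 0 < ∑ i, M j i * vx i :=
    fun j => Finset.sum_pos (fun i _ => mul_pos (hM j i) (hvxp i)) Finset.univ_nonempty
  have hdenq : ∀ j, 0 < ∑ i, M j i * vy i :=
    fun j => Finset.sum_pos (fun i _ => mul_pos (hM j i) (hvyp i)) Finset.univ_nonempty
  set Gx : ι → ℝ := fun j => eveS M x j ^ (1 / β) / ∑ i, M j i * vx i with hGx
  set Gy : ι → ℝ := fun j => eveS M y j ^ (1 / β) / ∑ i, M j i * vy i with hGy
  have hGxp : ∀ j, 0 < Gx j :=
    fun j => div_pos (Real.rpow_pos_of_pos (hSx j) _) (hdenp j)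
  have hGyp : ∀ j, 0 < Gy j :=
    fun j => div_pos (Real.rpow_pos_of_pos (hSy j) _) (hdenq j)
  have hG : dH Gx Gy ≤ (1 / β) * (τ * dH x y) + τ * ((1 / β) * dH x y
      + ((β - 1) / β) * (τ * dH x y)) := by
    have step := dH_div_le (x := fun j => eveS M x j ^ (1 / β))
      (y := fun j => eveS M y j ^ (1 / β))
      (z := fun j => ∑ i, M j i * vx i) (w := fun j => ∑ i, M j i * vy i)
      (fun j => Real.rpow_pos_of_pos (hSx j) _) (fun j => Real.rpow_pos_of_pos (hSy j) _)
      hdenp hdenq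
    rw [hnum] at step
    refine step.trans ?_
    have h2 := hden.trans (mul_le_mul_of_nonneg_left hv hτ0)
    have h3 := mul_le_mul_of_nonneg_left hSd hob
    linarith
  have hTx : eveT M β x = fun j => Gx j ^ (β / (1 + β)) := by
    funext j
    have e : (∑ i, M j i * x i ^ (-1 / β) * eveS M x i ^ ((1 - β) / β)) = ∑ i, M j i * vx i :=
      Finset.sum_congr rfl fun i _ => by simp only [hvx]; ring
    simp only [eveT, hGx, e]
  have hTy : eveT M β y = fun j => Gy j ^ (β / (1 + β)) := by
    funext j
    have e : (∑ i, M j i * y i ^ (-1 / β) * eveS M y i ^ ((1 - β) / β)) = ∑ i, M j i * vy i :=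
      Finset.sum_congr rfl fun i _ => by simp only [hvy]; ring
    simp only [eveT, hGy, e]
  have hbb1 : (0:ℝ) ≤ β / (1 + β) := div_nonneg hβ0.le (by linarith)
  have hT : dH (eveT M β x) (eveT M β y) = (β / (1 + β)) * dH Gx Gy := by
    rw [hTx, hTy]
    exact dH_rpow hbb1 hGxp hGyp
  rw [hT]
  have hfinal : (β / (1 + β)) * ((1 / β) * (τ * dH x y) + τ * ((1 / β) * dH x y
      + ((β - 1) / β) * (τ * dH x y)))
      = ((2 * τ + τ ^ 2 * (β - 1)) / (1 + β)) * dH x y := by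
    field_simp
    ring
  calc (β / (1 + β)) * dH Gx Gy
      ≤ (β / (1 + β)) * ((1 / β) * (τ * dH x y) + τ * ((1 / β) * dH x y
        + ((β - 1) / β) * (τ * dH x y))) := mul_le_mul_of_nonneg_left hG hbb1
    _ = ((2 * τ + τ ^ 2 * (β - 1)) / (1 + β)) * dH x y := hfinal

end eve

section more
variable {ι : Type*} [Fintype ι] [Nonempty ι] {x y : ι → ℝ}

lemma log_ratio_bound (hx : ∀ i, 0 < x i) (hy : ∀ i, 0 < y i) (i j : ι) :
    |Real.log (x i / x j) - Real.log (y i / y j)| ≤ dH x y := by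
  have e : Real.log (x i / x j) - Real.log (y i / y j)
      = Real.log (x i / y i) - Real.log (x j / y j) := by
    rw [Real.log_div (hx i).ne' (hx j).ne', Real.log_div (hy i).ne' (hy j).ne',
      Real.log_div (hx i).ne' (hy i).ne', Real.log_div (hx j).ne' (hy j).ne']
    ring
  have b1 : ∀ k, Real.log (x k / y k) ≤ Real.log (⨆ i, x i / y i) := fun k =>
    Real.log_le_log (div_pos (hx k) (hy k)) (fle_sup (fun i => x i / y i) k)
  have b2 : ∀ k, Real.log (⨅ i, x i / y i) ≤ Real.log (x k / y k) := fun k =>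
    Real.log_le_log (inf_div_pos hx hy) (finf_le (fun i => x i / y i) k)
  rw [e, abs_le]
  simp only [dH]
  constructor
  · linarith [b1 j, b2 i]
  · linarith [b1 i, b2 j]

lemma dH_le_sum_abs_log (hx : ∀ i, 0 < x i) (hy : ∀ i, 0 < y i) :
    dH x y ≤ 2 * ∑ i, |Real.log (x i / y i)| := by
  obtain ⟨i, hi⟩ := sup_att (fun i => x i / y i)
  obtain ⟨j, hj⟩ := inf_att (fun i => x i / y i)
  have h1 : Real.log (x i / y i) ≤ ∑ k, |Real.log (x k / y k)| := by
    refine (le_abs_self _).trans ?_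
    exact Finset.single_le_sum (f := fun k => |Real.log (x k / y k)|) (fun k _ => abs_nonneg _) (Finset.mem_univ i)
  have h2 : -(∑ k, |Real.log (x k / y k)|) ≤ Real.log (x j / y j) := by
    refine le_trans ?_ (neg_abs_le _)
    simp only [neg_le_neg_iff]
    exact Finset.single_le_sum (f := fun k => |Real.log (x k / y k)|) (fun k _ => abs_nonneg _) (Finset.mem_univ j)
  simp only [dH, hi, hj]
  linarith

end more


/-- if both `S` and `u ↦ M u` are `τ`-contractions (with `0 ≤ τ < 1`) in the
Hilbert projective metric, then the EVE operator `T` has a strictly positive projective fixed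
point `u*` (i.e. `T u* = c • u*` for some `c > 0`), unique up to multiplication by a positive
scalar, and the iterates of `T` converge linearly to `u*` in the Hilbert projective metric with
rate `(2τ + τ²(β-1))/(1+β)`. -/
theorem eveT_unique_fixed_point_and_linear_convergence {ι : Type*} [Fintype ι] [Nonempty ι]
    (M : ι → ι → ℝ) (hM : ∀ i j, 0 < M i j)
    (β : ℝ) (hβ : 1 ≤ β) (τ : ℝ) (hτ0 : 0 ≤ τ) (hτ1 : τ < 1)
    (hS : ∀ x y : ι → ℝ, (∀ i, 0 < x i) → (∀ i, 0 < y i) →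
      dH (eveS M x) (eveS M y) ≤ τ * dH x y)
    (hMap : ∀ x y : ι → ℝ, (∀ i, 0 < x i) → (∀ i, 0 < y i) →
      dH (fun j => ∑ i, M j i * x i) (fun j => ∑ i, M j i * y i) ≤ τ * dH x y) :
    ∃ (ustar : ι → ℝ) (c : ℝ), (∀ i, 0 < ustar i) ∧ 0 < c ∧
      eveT M β ustar = c • ustar ∧
      (∀ w : ι → ℝ, (∀ i, 0 < w i) →
        (∃ c' : ℝ, 0 < c' ∧ eveT M β w = c' • w) → ∃ a : ℝ, 0 < a ∧ w = a • ustar) ∧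
      (∀ x : ι → ℝ, (∀ i, 0 < x i) → ∀ n : ℕ,
        dH ((eveT M β)^[n] x) ustar ≤
          ((2 * τ + τ ^ 2 * (β - 1)) / (1 + β)) ^ n * dH x ustar) := by
  have hβ0 : 0 < β := lt_of_lt_of_le one_pos hβ
  set κ : ℝ := (2 * τ + τ ^ 2 * (β - 1)) / (1 + β) with hκ
  have h1β : (0:ℝ) < 1 + β := by linarith
  have hκ0 : 0 ≤ κ := by
    apply div_nonneg _ h1β.le
    have : 0 ≤ τ ^ 2 * (β - 1) := mul_nonneg (sq_nonneg τ) (by linarith)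
    linarith
  have hκ1 : κ < 1 := by
    rw [hκ, div_lt_one h1β]
    nlinarith [mul_nonneg (mul_nonneg hτ0 (sub_nonneg.mpr hτ1.le)) (sub_nonneg.mpr hβ)]
  have K : ∀ x y : ι → ℝ, (∀ i, 0 < x i) → (∀ i, 0 < y i) →
      dH (eveT M β x) (eveT M β y) ≤ κ * dH x y :=
    fun x y hx hy => eveT_contracts hM hβ hτ0 hS hMap hx hy
  -- the iteration sequence
  set u : ℕ → ι → ℝ := fun n => (eveT M β)^[n] (fun _ => 1) with hu
  have husucc : ∀ n, u (n + 1) = eveT M β (u n) := by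
    intro n
    simp only [hu, Function.iterate_succ_apply']
  have hup : ∀ n, ∀ i, 0 < u n i := by
    intro n
    induction n with
    | zero => intro i; simp [hu]
    | succ n ih => rw [husucc]; exact eveT_pos hM ih
  set D : ℝ := dH (u 0) (u 1) with hD
  have hstep : ∀ n, dH (u n) (u (n + 1)) ≤ κ ^ n * D := by
    intro n
    induction n with
    | zero => simp; exact le_rfl
    | succ n ih =>
      have := K (u n) (u (n + 1)) (hup n) (hup (n + 1))
      rw [← husucc, ← husucc] at this
      calc dH (u (n + 1)) (u (n + 2)) ≤ κ * dH (u n) (u (n + 1)) := this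
        _ ≤ κ * (κ ^ n * D) := mul_le_mul_of_nonneg_left ih hκ0
        _ = κ ^ (n + 1) * D := by ring
  obtain i0 := Classical.arbitrary ι
  set c : ℕ → ι → ℝ := fun n i => Real.log (u n i / u n i0) with hc
  have hcauchy : ∀ i, ∃ l : ℝ, Filter.Tendsto (fun n => c n i) Filter.atTop (nhds l) := by
    intro i
    have : CauchySeq (fun n => c n i) := by
      apply cauchySeq_of_le_geometric κ D hκ1
      intro n
      rw [Real.dist_eq]
      calc |c n i - c (n + 1) i| ≤ dH (u n) (u (n + 1)) :=
          log_ratio_bound (hup n) (hup (n + 1)) i i0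
        _ ≤ κ ^ n * D := hstep n
        _ = D * κ ^ n := by ring
    exact cauchySeq_tendsto_of_complete this
  choose L hL using hcauchy
  set ustar : ι → ℝ := fun i => Real.exp (L i) with hustar
  have hustarp : ∀ i, 0 < ustar i := fun i => Real.exp_pos _
  -- convergence dH (u n) ustar → 0
  have hwd : ∀ n, dH (u n) ustar ≤ 2 * ∑ i, |c n i - L i| := by
    intro n
    have hwpos : ∀ i, 0 < u n i / u n i0 := fun i => div_pos (hup n i) (hup n i0)
    have hsm : (fun i => u n i / u n i0) = (u n i0)⁻¹ • u n := by
      funext i; simp [div_eq_inv_mul]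
    have e1 : dH (u n) ustar = dH (fun i => u n i / u n i0) ustar := by
      rw [hsm, dH_smul_left (inv_pos.mpr (hup n i0)) (hup n) hustarp]
    rw [e1]
    refine (dH_le_sum_abs_log hwpos hustarp).trans ?_
    have e2 : ∀ i, Real.log (u n i / u n i0 / ustar i) = c n i - L i := by
      intro i
      rw [Real.log_div (hwpos i).ne' (hustarp i).ne', hustar]
      simp [hc]
    simp only [e2]
    exact le_refl _
  have hconv : Filter.Tendsto (fun n => dH (u n) ustar) Filter.atTop (nhds 0) := by
    apply squeeze_zero (fun n => dH_nonneg (hup n) hustarp) hwd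
    have : Filter.Tendsto (fun n => ∑ i, |c n i - L i|) Filter.atTop (nhds 0) := by
      have h0 : (0:ℝ) = ∑ i : ι, (0:ℝ) := by simp
      rw [h0]
      apply tendsto_finset_sum
      intro i _
      have : Filter.Tendsto (fun n => c n i - L i) Filter.atTop (nhds 0) := by
        have := (hL i).sub_const (L i)
        simpa using this
      simpa using this.abs
    have := this.const_mul (2:ℝ)
    simpa using this
  -- fixed point
  have hfp0 : dH (eveT M β ustar) ustar = 0 := by
    have hTu : ∀ i, 0 < eveT M β ustar i := eveT_pos hM hustarp
    have hb : ∀ n, dH (eveT M β ustar) ustar ≤ dH (u (n + 1)) ustar + κ * dH (u n) ustar := by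
      intro n
      have t1 : dH (eveT M β ustar) ustar ≤ dH (eveT M β ustar) (u (n + 1)) +
          dH (u (n + 1)) ustar := dH_triangle hTu (hup (n + 1)) hustarp
      have t2 : dH (eveT M β ustar) (u (n + 1)) = dH (u (n + 1)) (eveT M β ustar) :=
        dH_symm hTu (hup (n + 1))
      have t3 : dH (u (n + 1)) (eveT M β ustar) ≤ κ * dH (u n) ustar := by
        rw [husucc]
        exact K (u n) ustar (hup n) hustarp
      linarith
    have ha : Filter.Tendsto (fun n => dH (u (n + 1)) ustar + κ * dH (u n) ustar)
        Filter.atTop (nhds 0) := by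
      have h1 : Filter.Tendsto (fun n => dH (u (n + 1)) ustar) Filter.atTop (nhds 0) :=
        hconv.comp (Filter.tendsto_add_atTop_nat 1)
      have h2 := hconv.const_mul κ
      have := h1.add h2
      simpa using this
    have hge : dH (eveT M β ustar) ustar ≤ 0 := ge_of_tendsto' ha hb
    exact le_antisymm hge (dH_nonneg (eveT_pos hM hustarp) hustarp)
  obtain ⟨cc, hcc, hfix⟩ := dH_eq_zero (eveT_pos hM hustarp) hustarp hfp0
  refine ⟨ustar, cc, hustarp, hcc, hfix, ?_, ?_⟩
  · -- uniqueness
    intro w hw ⟨c', hc', hwfix⟩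
    have h1 : dH w ustar ≤ κ * dH w ustar := by
      have := K w ustar hw hustarp
      rw [hwfix, hfix] at this
      have e1 : dH (c' • w) (cc • ustar) = dH w (cc • ustar) :=
        dH_smul_left hc' hw (fun i => by simpa using mul_pos hcc (hustarp i))
      have e2 : dH w (cc • ustar) = dH w ustar := dH_smul_right hcc hw hustarp
      rw [e1, e2] at this
      exact this
    have h2 : dH w ustar = 0 := by
      have hnn := dH_nonneg hw hustarp
      nlinarith
    exact dH_eq_zero hw hustarp h2
  · -- convergence
    intro x hx n
    induction n with
    | zero => simp
    | succ n ih =>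
      have hxn : ∀ i, 0 < (eveT M β)^[n] x i := by
        clear ih
        induction n with
        | zero => simpa using hx
        | succ n ih2 =>
          rw [Function.iterate_succ_apply']
          exact eveT_pos hM ih2
      have step : dH ((eveT M β)^[n + 1] x) ustar ≤ κ * dH ((eveT M β)^[n] x) ustar := by
        rw [Function.iterate_succ_apply']
        have := K ((eveT M β)^[n] x) ustar hxn hustarp
        rwa [hfix, dH_smul_right hcc (eveT_pos hM hxn) hustarp] at this
      calc dH ((eveT M β)^[n + 1] x) ustar ≤ κ * dH ((eveT M β)^[n] x) ustar := step
        _ ≤ κ * (κ ^ n * dH x ustar) := mul_le_mul_of_nonneg_left ih hκ0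
        _ = κ ^ (n + 1) * dH x ustar := by ring
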